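/- Let α ≥ β ≥ −1/2 with α > −1/2, ρ = α+β+1, and let G_0 be the real-valued function G_0(x) = φ_0(x) + (ρ/(2(α+1))) sinh x cosh x · φ̃_0(x), where φ_0(x) = (cosh x)^{−ρ} ₂F₁(ρ/2, (α−β+1)/2; α+1; tanh²x) and φ̃_0(x) = (cosh x)^{−ρ−2} ₂F₁(ρ/2 + 1, (α−β+1)/2; α+2; tanh²x). Then G_0(x) > 0 for all x ∈ ℝ. -/

import Mathlib

open Filter Topology

noncomputable def rpoch (a : ℝ) (k : ℕ) : ℝ := (ascPochhammer ℝ k).eval a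

/-- Gauss hypergeometric series ₂F₁(a,b;c;z) of real arguments. -/
noncomputable def rhyp2F1 (a b c z : ℝ) : ℝ :=
  ∑' n : ℕ, rpoch a n * rpoch b n / (rpoch c n * (n.factorial : ℝ)) * z ^ n

lemma rpoch_zero (a : ℝ) : rpoch a 0 = 1 := by simp [rpoch]

lemma rpoch_succ (a : ℝ) (n : ℕ) : rpoch a (n + 1) = rpoch a n * (a + n) :=
  ascPochhammer_succ_eval n a

lemma rpoch_succ_left (a : ℝ) (n : ℕ) : rpoch a (n + 1) = a * rpoch (a + 1) n := by
  simp [rpoch, ascPochhammer_succ_left, Polynomial.eval_comp]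

lemma rpoch_pos {a : ℝ} (ha : 0 < a) (n : ℕ) : 0 < rpoch a n := by
  induction n with
  | zero => simp [rpoch_zero]
  | succ n ih => rw [rpoch_succ]; positivity

lemma tendsto_ratio (a b : ℝ) :
    Tendsto (fun n : ℕ => ((n : ℝ) + a) / ((n : ℝ) + b)) atTop (𝓝 1) := by
  have hb : Tendsto (fun n : ℕ => (n : ℝ) + b) atTop atTop :=
    tendsto_atTop_add_const_right _ b tendsto_natCast_atTop_atTop
  have h0 : Tendsto (fun n : ℕ => (a - b) / ((n : ℝ) + b)) atTop (𝓝 0) :=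
    Tendsto.div_atTop tendsto_const_nhds hb
  have h1 : Tendsto (fun n : ℕ => 1 + (a - b) / ((n : ℝ) + b)) atTop (𝓝 1) := by
    simpa using tendsto_const_nhds.add h0
  refine h1.congr' ?_
  filter_upwards [hb.eventually_gt_atTop 0] with n hn
  field_simp
  ring

lemma hyp_summable {A B C : ℝ} (hA : 0 < A) (hB : 0 < B) (hC : 0 < C) {z : ℝ}
    (hz : 0 ≤ z) (hz1 : z < 1) :
    Summable (fun n : ℕ => rpoch A n * rpoch B n / (rpoch C n * (n.factorial : ℝ)) * z ^ n) := by
  rcases eq_or_lt_of_le hz with hz0 | hz0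
  · refine summable_of_ne_finset_zero (s := {0}) ?_
    intro n hn
    simp only [Finset.mem_singleton] at hn
    rw [← hz0, zero_pow hn, mul_zero]
  · set f : ℕ → ℝ := fun n => rpoch A n * rpoch B n / (rpoch C n * (n.factorial : ℝ)) * z ^ n
    have hfpos : ∀ n, 0 < f n := fun n => by
      have := rpoch_pos hA n; have := rpoch_pos hB n; have := rpoch_pos hC n
      have : (0:ℝ) < n.factorial := by positivity
      positivity
    refine summable_of_ratio_test_tendsto_lt_one hz1
      (Eventually.of_forall fun n => (hfpos n).ne') ?_
    have key : ∀ n : ℕ, ‖f (n+1)‖ / ‖f n‖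
        = (((n:ℝ) + A) / ((n:ℝ) + 1)) * (((n:ℝ) + B) / ((n:ℝ) + C)) * z := by
      intro n
      rw [Real.norm_eq_abs, Real.norm_eq_abs, abs_of_pos (hfpos _), abs_of_pos (hfpos _)]
      have hCn : (0:ℝ) < rpoch C n := rpoch_pos hC n
      have hAn : (0:ℝ) < rpoch A n := rpoch_pos hA n
      have hBn : (0:ℝ) < rpoch B n := rpoch_pos hB n
      have hfn : (0:ℝ) < (n.factorial : ℝ) := by positivity
      have hCn' : (0:ℝ) < (n:ℝ) + C := by positivity
      have hn1 : (0:ℝ) < (n:ℝ) + 1 := by positivity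
      simp only [f, rpoch_succ, pow_succ, Nat.factorial_succ, Nat.cast_mul, Nat.cast_add,
        Nat.cast_one]
      field_simp
      ring
    rw [show z = 1 * 1 * z by ring] at hz1 ⊢
    rw [funext key]
    have h1 := tendsto_ratio A 1
    have h2 := tendsto_ratio B C
    simpa using (h1.mul h2).mul_const z

lemma key_le {A B C z : ℝ} (hA : 0 < A) (hB : 0 < B) (hC : 0 < C) (hAC : A < C)
    (hz : 0 ≤ z) (n : ℕ) :
    (A / C) * (rpoch (A+1) n * rpoch B n / (rpoch (C+1) n * (n.factorial : ℝ)) * z ^ n)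
      ≤ rpoch A n * rpoch B n / (rpoch C n * (n.factorial : ℝ)) * z ^ n := by
  have hCn : (0:ℝ) < rpoch C n := rpoch_pos hC n
  have hAn : (0:ℝ) < rpoch A n := rpoch_pos hA n
  have hBn : (0:ℝ) < rpoch B n := rpoch_pos hB n
  have hC1n : (0:ℝ) < rpoch (C+1) n := rpoch_pos (by linarith) n
  have hA1n : (0:ℝ) < rpoch (A+1) n := rpoch_pos (by linarith) n
  have hfn : (0:ℝ) < (n.factorial : ℝ) := by positivity
  have hCn' : (0:ℝ) < C + n := by positivity
  have hAn' : (0:ℝ) < A + n := by positivity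
  have e1 : A * rpoch (A+1) n = rpoch A n * (A + n) := by
    rw [← rpoch_succ_left, rpoch_succ]
  have e2 : C * rpoch (C+1) n = rpoch C n * (C + n) := by
    rw [← rpoch_succ_left, rpoch_succ]
  have e : (A / C) * (rpoch (A+1) n * rpoch B n / (rpoch (C+1) n * (n.factorial : ℝ)) * z ^ n)
      = (rpoch A n * rpoch B n / (rpoch C n * (n.factorial : ℝ)) * z ^ n) * ((A + n)/(C + n)) := by
    have e1' : rpoch (A+1) n = rpoch A n * (A + n) / A := by
      rw [← e1]; exact (mul_div_cancel_left₀ _ hA.ne').symm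
    have e2' : rpoch (C+1) n = rpoch C n * (C + n) / C := by
      rw [← e2]; exact (mul_div_cancel_left₀ _ hC.ne').symm
    rw [e1', e2']
    field_simp
  rw [e]
  have hratio : (A + n)/(C + n) ≤ 1 := (div_le_one hCn').2 (by linarith)
  have hterm : (0:ℝ) ≤ rpoch A n * rpoch B n / (rpoch C n * (n.factorial : ℝ)) * z ^ n := by
    positivity
  exact mul_le_of_le_one_right hterm hratio

theorem opdam_G0_pos (α β : ℝ) (h1 : α ≥ β) (h2 : β ≥ -(1/2)) (h3 : α > -(1/2)) (x : ℝ) :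
    0 <
      Real.cosh x ^ (-(α + β + 1)) *
          rhyp2F1 ((α + β + 1) / 2) ((α - β + 1) / 2) (α + 1) (Real.tanh x ^ 2) +
        ((α + β + 1) / (2 * (α + 1))) * Real.sinh x * Real.cosh x *
          (Real.cosh x ^ (-(α + β + 1) - 2) *
            rhyp2F1 ((α + β + 1) / 2 + 1) ((α - β + 1) / 2) (α + 2) (Real.tanh x ^ 2)) := by
  set A : ℝ := (α + β + 1) / 2 with hAdef
  set B : ℝ := (α - β + 1) / 2 with hBdef
  set C : ℝ := α + 1 with hCdef
  have hA : 0 < A := by simp only [hAdef]; linarith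
  have hB : 0 < B := by simp only [hBdef]; linarith
  have hC : 0 < C := by simp only [hCdef]; linarith
  have hAC : A < C := by simp only [hAdef, hCdef]; linarith
  have hch : 0 < Real.cosh x := Real.cosh_pos x
  -- tanh bounds
  have hsc : |Real.sinh x| < Real.cosh x := by
    rw [Real.abs_sinh, ← Real.cosh_abs]
    exact Real.sinh_lt_cosh _
  have hth : |Real.tanh x| < 1 := by
    rw [Real.tanh_eq_sinh_div_cosh, abs_div, abs_of_pos hch]
    exact (div_lt_one hch).2 hsc
  set z : ℝ := Real.tanh x ^ 2 with hzdef
  have hz : 0 ≤ z := sq_nonneg _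
  have hz1 : z < 1 := by
    rw [hzdef, ← sq_abs]
    calc |Real.tanh x| ^ 2 < 1 ^ 2 := by
          exact pow_lt_pow_left₀ hth (abs_nonneg _) two_ne_zero
      _ = 1 := one_pow 2
  -- the two series
  set f1 : ℕ → ℝ := fun n => rpoch A n * rpoch B n / (rpoch C n * (n.factorial : ℝ)) * z ^ n
    with hf1
  set f2 : ℕ → ℝ :=
      fun n => rpoch (A+1) n * rpoch B n / (rpoch (C+1) n * (n.factorial : ℝ)) * z ^ n with hf2
  have hs1 : Summable f1 := hyp_summable hA hB hC hz hz1
  have hs2 : Summable f2 := hyp_summable (by linarith) hB (by linarith) hz hz1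
  set c : ℝ := A / C with hcdef
  have hc : 0 < c := div_pos hA hC
  have hc1 : c < 1 := (div_lt_one hC).2 hAC
  -- F1, F2
  have hF1 : rhyp2F1 A B C z = ∑' n, f1 n := rfl
  have hC2 : α + 2 = C + 1 := by simp only [hCdef]; ring
  have hF2 : rhyp2F1 (A + 1) B (α + 2) z = ∑' n, f2 n := by rw [hC2]; rfl
  have hF2nonneg : 0 ≤ ∑' n, f2 n := tsum_nonneg fun n => by
    have := rpoch_pos (show (0:ℝ) < A + 1 by linarith) n
    have := rpoch_pos hB n
    have := rpoch_pos (show (0:ℝ) < C + 1 by linarith) n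
    have : (0:ℝ) < n.factorial := by positivity
    positivity
  -- the key positivity: F1 - c * F2 > 0
  have hkey : 0 < (∑' n, f1 n) - c * ∑' n, f2 n := by
    have hsub : Summable fun n => f1 n - c * f2 n := hs1.sub (hs2.mul_left c)
    have hpos : 0 < ∑' n, (f1 n - c * f2 n) := by
      refine Summable.tsum_pos hsub (fun n => sub_nonneg.2 (key_le hA hB hC hAC hz n)) 0 ?_
      have e0 : f1 0 = 1 := by simp [hf1, rpoch_zero]
      have e0' : f2 0 = 1 := by simp [hf2, rpoch_zero]
      rw [e0, e0']
      linarith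
    rwa [Summable.tsum_sub hs1 (hs2.mul_left c), tsum_mul_left] at hpos
  -- rewrite the rpow expressions
  have ePow : Real.cosh x ^ (-(α + β + 1) - 2) =
      Real.cosh x ^ (-(α + β + 1)) * (Real.cosh x ^ (2:ℕ))⁻¹ := by
    have aux : Real.cosh x ^ ((-2:ℝ)) = (Real.cosh x ^ (2:ℕ))⁻¹ := by
      rw [show ((-2:ℝ)) = -((2:ℕ):ℝ) by norm_num, Real.rpow_neg hch.le, Real.rpow_natCast]
    rw [show (-(α + β + 1) - 2 : ℝ) = -(α + β + 1) + (-2) by ring, Real.rpow_add hch, aux]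
  have hEq : Real.cosh x ^ (-(α + β + 1)) * rhyp2F1 A B C z +
        ((α + β + 1) / (2 * (α + 1))) * Real.sinh x * Real.cosh x *
          (Real.cosh x ^ (-(α + β + 1) - 2) * rhyp2F1 (A + 1) B (α + 2) z)
      = Real.cosh x ^ (-(α + β + 1)) *
          ((∑' n, f1 n) + c * Real.tanh x * ∑' n, f2 n) := by
    rw [ePow, hF1, hF2, Real.tanh_eq_sinh_div_cosh]
    have hcc : (α + β + 1) / (2 * (α + 1)) = c := by
      rw [hcdef, hAdef, hCdef]
      field_simp
    rw [hcc]
    have hchn : Real.cosh x ≠ 0 := hch.ne'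
    field_simp
  rw [hEq]
  have hrp : 0 < Real.cosh x ^ (-(α + β + 1)) := Real.rpow_pos_of_pos hch _
  refine mul_pos hrp ?_
  have hbound : -(c * ∑' n, f2 n) ≤ c * Real.tanh x * ∑' n, f2 n := by
    have h1' : -1 ≤ Real.tanh x := by
      have := abs_lt.1 hth
      linarith [this.1]
    have := mul_le_mul_of_nonneg_right
      (mul_le_mul_of_nonneg_left h1' hc.le) hF2nonneg
    calc -(c * ∑' n, f2 n) = c * (-1) * ∑' n, f2 n := by ring
      _ ≤ c * Real.tanh x * ∑' n, f2 n := this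
  linarith
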